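/- The sum over k ≥ 1 of h_k^{(2)}/k³ equals (35/4)·ζ(2)·ζ(3) − (31/2)·ζ(5). -/

import Mathlib

open scoped BigOperators

/-- Odd harmonic number `h_k^{(n)} = ∑_{i=1}^k 1/(2i-1)^n`. -/
noncomputable def h (n k : ℕ) : ℝ := ∑ i ∈ Finset.range k, (1 : ℝ) / (2 * (i : ℝ) + 1) ^ n

/-- Generalized harmonic number `H_k^{(n)} = ∑_{i=1}^k 1/i^n`. -/
noncomputable def H (n k : ℕ) : ℝ := ∑ i ∈ Finset.range k, (1 : ℝ) / ((i : ℝ) + 1) ^ n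

/-- Riemann zeta value at a positive integer `m ≥ 2`: `ζ(m) = ∑_{n≥1} 1/n^m`. -/
noncomputable def Z (m : ℕ) : ℝ := ∑' n : ℕ+, (1 : ℝ) / ((n : ℕ) : ℝ) ^ m

open Finset Filter Topology

namespace S11

lemma summable_inv_add_pow {p : ℕ} (hp : 2 ≤ p) :
    Summable (fun i : ℕ ↦ (1:ℝ)/((i:ℝ)+1)^p) := by
  have h1 := (Real.summable_one_div_nat_pow (p := p)).2 (by omega)
  have h2 := (summable_nat_add_iff (f := fun n : ℕ ↦ (1:ℝ)/(n:ℝ)^p) 1).2 h1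
  refine h2.congr ?_
  intro n; push_cast; ring

lemma summable_of_D {F : ℕ×ℕ → ℝ}
    (h0 : ∀ p : ℕ×ℕ, 0 ≤ F p)
    (hle : ∀ p : ℕ×ℕ, F p ≤ 1/(((p.1:ℝ)+1)^2*((p.2:ℝ)+1)^2)) : Summable F := by
  have hf : Summable (fun i : ℕ ↦ (1:ℝ)/((i:ℝ)+1)^2) := summable_inv_add_pow le_rfl
  have hf0 : (0 : ℕ → ℝ) ≤ (fun i : ℕ ↦ (1:ℝ)/((i:ℝ)+1)^2) :=
    Pi.le_def.mpr (fun i ↦ by positivity)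
  have hb := hf.mul_of_nonneg hf hf0 hf0
  refine Summable.of_nonneg_of_le h0 ?_ hb
  intro p
  calc F p ≤ 1/(((p.1:ℝ)+1)^2*((p.2:ℝ)+1)^2) := hle p
  _ = (1/((p.1:ℝ)+1)^2) * (1/((p.2:ℝ)+1)^2) := by rw [div_mul_div_comm, one_mul]

def eqL : ℕ×ℕ ≃ ({p : ℕ×ℕ | p.1 ≤ p.2} : Set (ℕ×ℕ)) where
  toFun := fun p ↦ ⟨(p.1, p.1+p.2), by simp⟩
  invFun := fun q ↦ (q.1.1, q.1.2 - q.1.1)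
  left_inv := by
    rintro ⟨a,b⟩
    show ((a:ℕ), a + b - a) = (a, b)
    refine Prod.ext rfl (by omega)
  right_inv := by
    rintro ⟨⟨a,b⟩, hab⟩
    have hab' : a ≤ b := hab
    apply Subtype.ext
    show ((a:ℕ), a + (b - a)) = (a, b)
    refine Prod.ext rfl (by omega)

def eqR : ℕ×ℕ ≃ (({p : ℕ×ℕ | p.1 ≤ p.2}ᶜ : Set (ℕ×ℕ))) where
  toFun := fun p ↦ ⟨(p.1+p.2+1, p.1), by simp⟩
  invFun := fun q ↦ (q.1.2, q.1.1 - q.1.2 - 1)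
  left_inv := by
    rintro ⟨a,b⟩
    show ((a:ℕ), a + b + 1 - a - 1) = (a, b)
    refine Prod.ext rfl (by omega)
  right_inv := by
    rintro ⟨⟨a,b⟩, hab⟩
    have hab' : b < a := by
      have := hab
      simpa [Set.mem_compl_iff, Set.mem_setOf_eq, not_le] using this
    apply Subtype.ext
    show ((b + (a - b - 1) + 1 : ℕ), b) = (a, b)
    refine Prod.ext (by omega) rfl

lemma tsum_split {f : ℕ×ℕ → ℝ} (hs : Summable f) :
    ∑' p : ℕ×ℕ, f p
      = ∑' p : ℕ×ℕ, f (p.1, p.1 + p.2) + ∑' p : ℕ×ℕ, f (p.1 + p.2 + 1, p.1) := by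
  classical
  have h1 : ∑' p : ℕ×ℕ, f (p.1, p.1 + p.2)
      = ∑' q : ({p : ℕ×ℕ | p.1 ≤ p.2} : Set (ℕ×ℕ)), f q :=
    eqL.tsum_eq (fun q : ({p : ℕ×ℕ | p.1 ≤ p.2} : Set (ℕ×ℕ)) ↦ f q)
  have h2 : ∑' p : ℕ×ℕ, f (p.1 + p.2 + 1, p.1)
      = ∑' q : (({p : ℕ×ℕ | p.1 ≤ p.2}ᶜ : Set (ℕ×ℕ))), f q :=
    eqR.tsum_eq (fun q : (({p : ℕ×ℕ | p.1 ≤ p.2}ᶜ : Set (ℕ×ℕ))) ↦ f q)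
  rw [h1, h2]
  exact (Summable.tsum_add_tsum_compl (hs.subtype _) (hs.subtype _)).symm

lemma tsum_triangle {F : ℕ → ℕ → ℝ}
    (hs : Summable (fun p : ℕ×ℕ ↦ F p.1 (p.1 + p.2))) :
    ∑' p : ℕ×ℕ, F p.1 (p.1 + p.2) = ∑' j : ℕ, ∑ i ∈ Finset.range (j+1), F i j := by
  classical
  set G : ℕ×ℕ → ℝ := fun q ↦ if q.2 ≤ q.1 then F q.2 q.1 else 0 with hG
  have hinj : Function.Injective (fun p : ℕ×ℕ ↦ (p.1 + p.2, p.1)) := by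
    intro p q hpq
    simp only [Prod.mk.injEq] at hpq
    obtain ⟨h1, h2⟩ := hpq
    exact Prod.ext h2 (by omega)
  have hcomp : (fun p : ℕ×ℕ ↦ F p.1 (p.1 + p.2)) = G ∘ (fun p : ℕ×ℕ ↦ (p.1 + p.2, p.1)) := by
    funext p
    simp [hG]
  have hrange : Function.support G ⊆ Set.range (fun p : ℕ×ℕ ↦ (p.1 + p.2, p.1)) := by
    rintro ⟨a, b⟩ hq
    have hba : b ≤ a := by
      by_contra hc
      simp only [hG, Function.mem_support] at hq
      exact hq (if_neg hc)
    refine ⟨(b, a - b), ?_⟩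
    show ((b + (a-b) : ℕ), b) = (a, b)
    refine Prod.ext (by omega) rfl
  have hGs : Summable G := by
    rw [hcomp] at hs
    exact (Function.Injective.summable_iff hinj
      (fun x hx ↦ by
        by_contra h0
        exact hx (hrange h0))).1 hs
  have key : ∑' p : ℕ×ℕ, F p.1 (p.1 + p.2) = ∑' q : ℕ×ℕ, G q := by
    rw [hcomp]
    exact Function.Injective.tsum_eq hinj hrange
  rw [key, Summable.tsum_prod' hGs (fun b ↦ (hGs.prod_factor b))]
  congr 1
  funext j
  rw [tsum_eq_sum (s := Finset.range (j+1)) ?_]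
  · apply Finset.sum_congr rfl
    intro i hi
    simp only [Finset.mem_range] at hi
    simp [hG, if_pos (by omega : i ≤ j)]
  · intro i hi
    simp only [Finset.mem_range, not_lt] at hi
    simp [hG, if_neg (by omega : ¬ i ≤ j)]


lemma summable_inv_add_pow' {p : ℕ} (hp : 2 ≤ p) :
    Summable (fun i : ℕ ↦ (1:ℝ)/((i:ℝ)+1)^p) := by
  have h1 := (Real.summable_one_div_nat_pow (p := p)).2 (by omega)
  have h2 := (summable_nat_add_iff (f := fun n : ℕ ↦ (1:ℝ)/(n:ℝ)^p) 1).2 h1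
  refine h2.congr ?_
  intro n; push_cast; ring

lemma tsum_swap (f : ℕ×ℕ → ℝ) : ∑' p : ℕ×ℕ, f (p.2, p.1) = ∑' p : ℕ×ℕ, f p :=
  (Equiv.prodComm ℕ ℕ).tsum_eq f

lemma hasSum_fiber {g : ℕ×ℕ → ℝ} (hs : Summable g) :
    HasSum (fun i : ℕ ↦ ∑' j : ℕ, g (i,j)) (∑' p : ℕ×ℕ, g p) :=
  HasSum.prod_fiberwise hs.hasSum (fun i ↦ (hs.prod_factor i).hasSum)

lemma tsum_peel {f : ℕ×ℕ → ℝ} (hs : Summable f) :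
    ∑' p : ℕ×ℕ, f p = ∑' i : ℕ, f (i, 0) + ∑' p : ℕ×ℕ, f (p.1, p.2+1) := by
  have hshift : Summable (fun p : ℕ×ℕ ↦ f (p.1, p.2+1)) :=
    hs.comp_injective (f := f) (i := fun p : ℕ×ℕ ↦ (p.1, p.2+1))
      (by intro p q hpq
          simp only [Prod.mk.injEq] at hpq
          exact Prod.ext hpq.1 (by omega))
  have h0 : Summable (fun i : ℕ ↦ f (i, 0)) :=
    hs.comp_injective (f := f) (i := fun i : ℕ ↦ (i, 0))
      (by intro a b hab
          simpa only [Prod.mk.injEq, and_true] using hab)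
  rw [Summable.tsum_prod' hs hs.prod_factor]
  have h1 : ∀ i : ℕ, ∑' j : ℕ, f (i,j) = f (i,0) + ∑' j : ℕ, f (i, j+1) :=
    fun i ↦ Summable.tsum_eq_zero_add (hs.prod_factor i)
  rw [tsum_congr h1, Summable.tsum_add h0 (hasSum_fiber hshift).summable,
    ← Summable.tsum_prod' hshift hshift.prod_factor]

lemma tsum_telescope {v : ℕ → ℝ} (k : ℕ) (hv : Tendsto v atTop (𝓝 0))
    (hs : Summable (fun g : ℕ ↦ v g - v (g+k))) :
    ∑' g : ℕ, (v g - v (g+k)) = ∑ t ∈ Finset.range k, v t := by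
  have hps : ∀ G : ℕ, ∑ g ∈ range G, (v g - v (g+k))
      = ∑ t ∈ range k, v t - ∑ t ∈ range k, v (G+t) := by
    intro G
    induction G with
    | zero => simp
    | succ G ih =>
        rw [Finset.sum_range_succ, ih]
        have h2 : ∑ t ∈ range k, (v (G+t) - v (G+t+1)) = v G - v (G+k) := by
          simpa [Nat.add_assoc] using Finset.sum_range_sub' (fun t ↦ v (G+t)) k
        rw [Finset.sum_sub_distrib] at h2
        have h3 : ∑ t ∈ range k, v (G+1+t) = ∑ t ∈ range k, v (G+t+1) :=
          Finset.sum_congr rfl (fun t _ ↦ by rw [Nat.add_right_comm])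
        rw [h3]
        linarith
  have hS : Tendsto (fun G : ℕ ↦ ∑ t ∈ range k, v (G+t)) atTop (𝓝 0) := by
    have := tendsto_finset_sum (range k)
      (fun t _ ↦ hv.comp (tendsto_add_atTop_nat t) : ∀ t ∈ range k,
        Tendsto (fun G : ℕ ↦ v (G+t)) atTop (𝓝 0))
    simpa using this
  have hlim : Tendsto (fun G : ℕ ↦ ∑ g ∈ range G, (v g - v (g+k))) atTop
      (𝓝 (∑ t ∈ range k, v t - 0)) := by
    have hc := tendsto_const_nhds (x := ∑ t ∈ range k, v t) (f := atTop (α := ℕ))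
    refine (hc.sub hS).congr ?_
    intro G; exact (hps G).symm
  have := tendsto_nhds_unique hs.hasSum.tendsto_sum_nat hlim
  rw [this, sub_zero]

lemma tendsto_v_odd : Tendsto (fun g : ℕ ↦ (1:ℝ)/(2*g+1)) atTop (𝓝 0) := by
  apply squeeze_zero (fun g ↦ by positivity) (g := fun g : ℕ ↦ (1:ℝ)/((g:ℝ)+1))
    (fun t ↦ ?_) tendsto_one_div_add_atTop_nhds_zero_nat
  apply one_div_le_one_div_of_le (by positivity)
  have : (0:ℝ) ≤ t := Nat.cast_nonneg t
  linarith

lemma tendsto_v_nat : Tendsto (fun g : ℕ ↦ (1:ℝ)/(g+1)) atTop (𝓝 0) :=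
  tendsto_one_div_add_atTop_nhds_zero_nat


lemma aux_tel_odd (g k : ℝ) (hg : 0 ≤ g) (hk : 0 ≤ k) :
    1/(2*g+1) - 1/(2*(g+k)+1) ≤ 2*k*(1/(g+1)^2) := by
  have h1 : (0:ℝ) < 2*g+1 := by linarith
  have h2 : (0:ℝ) < 2*(g+k)+1 := by linarith
  have key : 1/(2*g+1) - 1/(2*(g+k)+1) = 2*k / ((2*g+1)*(2*(g+k)+1)) := by
    field_simp
    try ring
  rw [key]
  have h3 := div_le_div_of_nonneg_left (a := 2*k) (c := (g+1)^2)
    (b := (2*g+1)*(2*(g+k)+1)) (by linarith) (by positivity) (by nlinarith)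
  calc 2*k / ((2*g+1)*(2*(g+k)+1)) ≤ 2*k/((g+1)^2) := h3
  _ = 2*k*(1/(g+1)^2) := by ring

lemma aux_tel_nat (g k : ℝ) (hg : 0 ≤ g) (hk : 0 ≤ k) :
    1/(g+1) - 1/(g+k+1) ≤ k*(1/(g+1)^2) := by
  have h1 : (0:ℝ) < g+1 := by linarith
  have h2 : (0:ℝ) < g+k+1 := by linarith
  have key : 1/(g+1) - 1/(g+k+1) = k / ((g+1)*(g+k+1)) := by
    field_simp
    try ring
  rw [key]
  have h3 := div_le_div_of_nonneg_left (a := k) (c := (g+1)^2)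
    (b := (g+1)*(g+k+1)) (by linarith) (by positivity) (by nlinarith)
  calc k / ((g+1)*(g+k+1)) ≤ k/((g+1)^2) := h3
  _ = k*(1/(g+1)^2) := by ring

lemma summable_tel_odd (k : ℕ) :
    Summable (fun g : ℕ ↦ (1:ℝ)/(2*g+1) - 1/(2*((g+k:ℕ):ℝ)+1)) := by
  have hsb : Summable (fun g : ℕ ↦ (2*k:ℝ) * (1/((g:ℝ)+1)^2)) :=
    (summable_inv_add_pow' le_rfl).mul_left _
  refine Summable.of_nonneg_of_le (fun g ↦ ?_) (fun g ↦ ?_) hsb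
  · have h1 : (0:ℝ) < 2*(g:ℝ)+1 := by positivity
    have h2 := one_div_le_one_div_of_le h1 (by push_cast; linarith [Nat.cast_nonneg (α := ℝ) k] :
      (2*(g:ℝ)+1) ≤ 2*((g+k:ℕ):ℝ)+1)
    linarith
  · have h := aux_tel_odd (g:ℝ) (k:ℝ) (Nat.cast_nonneg g) (Nat.cast_nonneg k)
    push_cast
    linarith

lemma summable_tel_nat (k : ℕ) :
    Summable (fun g : ℕ ↦ (1:ℝ)/(g+1) - 1/(((g+k:ℕ):ℝ)+1)) := by
  have hsb : Summable (fun g : ℕ ↦ (k:ℝ) * (1/((g:ℝ)+1)^2)) :=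
    (summable_inv_add_pow' le_rfl).mul_left _
  refine Summable.of_nonneg_of_le (fun g ↦ ?_) (fun g ↦ ?_) hsb
  · have h1 : (0:ℝ) < (g:ℝ)+1 := by positivity
    have h2 := one_div_le_one_div_of_le h1 (by push_cast; linarith [Nat.cast_nonneg (α := ℝ) k] :
      ((g:ℝ)+1) ≤ ((g+k:ℕ):ℝ)+1)
    linarith
  · have h := aux_tel_nat (g:ℝ) (k:ℝ) (Nat.cast_nonneg g) (Nat.cast_nonneg k)
    push_cast
    linarith

lemma tel_odd (k : ℕ) :
    ∑' g : ℕ, ((1:ℝ)/(2*g+1) - 1/(2*(g:ℝ)+2*k+1)) = ∑ t ∈ Finset.range k, (1:ℝ)/(2*t+1) := by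
  have h := tsum_telescope (v := fun g : ℕ ↦ (1:ℝ)/(2*(g:ℝ)+1)) k tendsto_v_odd (summable_tel_odd k)
  rw [← h]
  apply tsum_congr
  intro g
  push_cast
  ring

lemma tel_nat (k : ℕ) :
    ∑' g : ℕ, ((1:ℝ)/(g+1) - 1/((g:ℝ)+k+1)) = ∑ t ∈ Finset.range k, (1:ℝ)/(t+1) := by
  have h := tsum_telescope (v := fun g : ℕ ↦ (1:ℝ)/((g:ℝ)+1)) k tendsto_v_nat (summable_tel_nat k)
  rw [← h]
  apply tsum_congr
  intro g
  push_cast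
  ring


-- ===== term functions =====
noncomputable def fA1 : ℕ×ℕ → ℝ := fun p ↦ 1/((2*(p.1:ℝ)+2*p.2+2)^3*(2*p.1+1)^2)
noncomputable def fA2 : ℕ×ℕ → ℝ := fun p ↦ 1/((2*(p.1:ℝ)+2*p.2+3)^2*(2*p.1+2)^3)
noncomputable def fA3 : ℕ×ℕ → ℝ := fun p ↦ 1/((2*(p.1:ℝ)+2*p.2+2)^2*(2*p.1+1)^3)
noncomputable def fA4 : ℕ×ℕ → ℝ := fun p ↦ 1/((2*(p.1:ℝ)+2*p.2+3)^3*(2*p.1+2)^2)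
noncomputable def fA5 : ℕ×ℕ → ℝ := fun p ↦ 1/((2*(p.1:ℝ)+2*p.2+2)^4*(2*p.1+1))
noncomputable def fA6 : ℕ×ℕ → ℝ := fun p ↦ 1/((2*(p.1:ℝ)+2*p.2+3)^4*(2*p.1+2))
noncomputable def fB1 : ℕ×ℕ → ℝ := fun p ↦ 1/((2*(p.1:ℝ)+2*p.2+3)^3*(2*p.1+1)^2)
noncomputable def fB2 : ℕ×ℕ → ℝ := fun p ↦ 1/((2*(p.1:ℝ)+2*p.2+3)^2*(2*p.1+1)^3)
noncomputable def fB3 : ℕ×ℕ → ℝ := fun p ↦ 1/((2*(p.1:ℝ)+2*p.2+3)^4*(2*p.1+1))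
noncomputable def fB0 : ℕ×ℕ → ℝ := fun p ↦ 1/((2*(p.1:ℝ)+2*p.2+1)^2*(2*p.1+1)^3)
noncomputable def fC9 : ℕ×ℕ → ℝ := fun p ↦ 1/((2*(p.2:ℝ)+1)*(2*(p.1:ℝ)+2*p.2+3)*(2*(p.1:ℝ)+2)^3)
noncomputable def fCE : ℕ×ℕ → ℝ := fun p ↦ 1/((2*(p.2:ℝ)+1)*(2*(p.1:ℝ)+2*p.2+2)*(2*(p.1:ℝ)+1)^3)
noncomputable def fCO : ℕ×ℕ → ℝ := fun p ↦ 1/((2*(p.2:ℝ)+2)*(2*(p.1:ℝ)+2*p.2+3)*(2*(p.1:ℝ)+1)^3)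

noncomputable def A1 : ℝ := ∑' p : ℕ×ℕ, fA1 p
noncomputable def A2 : ℝ := ∑' p : ℕ×ℕ, fA2 p
noncomputable def A3 : ℝ := ∑' p : ℕ×ℕ, fA3 p
noncomputable def A4 : ℝ := ∑' p : ℕ×ℕ, fA4 p
noncomputable def A5 : ℝ := ∑' p : ℕ×ℕ, fA5 p
noncomputable def A6 : ℝ := ∑' p : ℕ×ℕ, fA6 p
noncomputable def B1 : ℝ := ∑' p : ℕ×ℕ, fB1 p
noncomputable def B2 : ℝ := ∑' p : ℕ×ℕ, fB2 p
noncomputable def B3 : ℝ := ∑' p : ℕ×ℕ, fB3 p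

-- ===== polynomial bounds =====
section bounds
variable {x y : ℝ}

lemma bnd_std (hx : 0 ≤ x) (hy : 0 ≤ y) {a b : ℝ} (ha1 : 1 ≤ a) (hb1 : 1 ≤ b)
    (hya : y + 1 ≤ a) (hxb : x + 1 ≤ b) {m n : ℕ} (hm : 2 ≤ m) (hn : 2 ≤ n) :
    (x+1)^2*(y+1)^2 ≤ a^m*b^n := by
  have hA : (y+1)^2 ≤ a^m := by
    calc (y+1)^2 ≤ a^2 := pow_le_pow_left₀ (by linarith) hya 2
    _ ≤ a^m := pow_le_pow_right₀ ha1 hm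
  have hB : (x+1)^2 ≤ b^n := by
    calc (x+1)^2 ≤ b^2 := pow_le_pow_left₀ (by linarith) hxb 2
    _ ≤ b^n := pow_le_pow_right₀ hb1 hn
  calc (x+1)^2*(y+1)^2 = (y+1)^2*(x+1)^2 := by ring
  _ ≤ a^m*b^n := mul_le_mul hA hB (by positivity) (pow_nonneg (by linarith) m)

lemma bnd_lin1 (hx : 0 ≤ x) (hy : 0 ≤ y) {a b : ℝ} (hab : (x+1)*(y+1) ≤ a^2) (hb1 : 1 ≤ b)
    (ha0 : 0 ≤ a) :
    (x+1)^2*(y+1)^2 ≤ a^4*b := by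
  have h4 : (x+1)^2*(y+1)^2 ≤ a^4 := by
    have h := pow_le_pow_left₀ (by positivity : (0:ℝ) ≤ (x+1)*(y+1)) hab 2
    calc (x+1)^2*(y+1)^2 = ((x+1)*(y+1))^2 := by ring
    _ ≤ (a^2)^2 := h
    _ = a^4 := by ring
  calc (x+1)^2*(y+1)^2 ≤ a^4 := h4
  _ ≤ a^4*b := le_mul_of_one_le_right (pow_nonneg ha0 4) hb1

lemma bnd_C (hx : 0 ≤ x) (hy : 0 ≤ y) {c d b : ℝ} (hcd : (y+1)^2 ≤ c*d) (hxb : x + 1 ≤ b)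
    (hb1 : 1 ≤ b) :
    (x+1)^2*(y+1)^2 ≤ c*d*b^3 := by
  have hB : (x+1)^2 ≤ b^3 := by
    calc (x+1)^2 ≤ b^2 := pow_le_pow_left₀ (by linarith) hxb 2
    _ ≤ b^3 := pow_le_pow_right₀ hb1 (by norm_num)
  calc (x+1)^2*(y+1)^2 = (y+1)^2*(x+1)^2 := by ring
  _ ≤ (c*d)*b^3 := mul_le_mul hcd hB (by positivity) (by nlinarith [sq_nonneg (y+1)])
  _ = c*d*b^3 := by ring

end bounds

-- ===== summability of term functions =====

lemma sfA1 : Summable fA1 := by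
  refine summable_of_D (fun p ↦ by unfold fA1; positivity) (fun p ↦ ?_)
  have hx : (0:ℝ) ≤ p.1 := Nat.cast_nonneg _
  have hy : (0:ℝ) ≤ p.2 := Nat.cast_nonneg _
  unfold fA1
  apply one_div_le_one_div_of_le (by positivity)
  exact bnd_std hx hy (by linarith) (by linarith) (by linarith) (by linarith)
    (by norm_num) (by norm_num)

lemma sfA2 : Summable fA2 := by
  refine summable_of_D (fun p ↦ by unfold fA2; positivity) (fun p ↦ ?_)
  have hx : (0:ℝ) ≤ p.1 := Nat.cast_nonneg _
  have hy : (0:ℝ) ≤ p.2 := Nat.cast_nonneg _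
  unfold fA2
  apply one_div_le_one_div_of_le (by positivity)
  exact bnd_std hx hy (by linarith) (by linarith) (by linarith) (by linarith)
    (by norm_num) (by norm_num)

lemma sfA3 : Summable fA3 := by
  refine summable_of_D (fun p ↦ by unfold fA3; positivity) (fun p ↦ ?_)
  have hx : (0:ℝ) ≤ p.1 := Nat.cast_nonneg _
  have hy : (0:ℝ) ≤ p.2 := Nat.cast_nonneg _
  unfold fA3
  apply one_div_le_one_div_of_le (by positivity)
  exact bnd_std hx hy (by linarith) (by linarith) (by linarith) (by linarith)
    (by norm_num) (by norm_num)

lemma sfA4 : Summable fA4 := by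
  refine summable_of_D (fun p ↦ by unfold fA4; positivity) (fun p ↦ ?_)
  have hx : (0:ℝ) ≤ p.1 := Nat.cast_nonneg _
  have hy : (0:ℝ) ≤ p.2 := Nat.cast_nonneg _
  unfold fA4
  apply one_div_le_one_div_of_le (by positivity)
  exact bnd_std hx hy (by linarith) (by linarith) (by linarith) (by linarith)
    (by norm_num) (by norm_num)

lemma sfB1 : Summable fB1 := by
  refine summable_of_D (fun p ↦ by unfold fB1; positivity) (fun p ↦ ?_)
  have hx : (0:ℝ) ≤ p.1 := Nat.cast_nonneg _
  have hy : (0:ℝ) ≤ p.2 := Nat.cast_nonneg _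
  unfold fB1
  apply one_div_le_one_div_of_le (by positivity)
  exact bnd_std hx hy (by linarith) (by linarith) (by linarith) (by linarith)
    (by norm_num) (by norm_num)

lemma sfB2 : Summable fB2 := by
  refine summable_of_D (fun p ↦ by unfold fB2; positivity) (fun p ↦ ?_)
  have hx : (0:ℝ) ≤ p.1 := Nat.cast_nonneg _
  have hy : (0:ℝ) ≤ p.2 := Nat.cast_nonneg _
  unfold fB2
  apply one_div_le_one_div_of_le (by positivity)
  exact bnd_std hx hy (by linarith) (by linarith) (by linarith) (by linarith)
    (by norm_num) (by norm_num)

lemma sfB0 : Summable fB0 := by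
  refine summable_of_D (fun p ↦ by unfold fB0; positivity) (fun p ↦ ?_)
  have hx : (0:ℝ) ≤ p.1 := Nat.cast_nonneg _
  have hy : (0:ℝ) ≤ p.2 := Nat.cast_nonneg _
  unfold fB0
  apply one_div_le_one_div_of_le (by positivity)
  exact bnd_std hx hy (by linarith) (by linarith) (by linarith) (by linarith)
    (by norm_num) (by norm_num)

lemma sfA5 : Summable fA5 := by
  refine summable_of_D (fun p ↦ by unfold fA5; positivity) (fun p ↦ ?_)
  have hx : (0:ℝ) ≤ p.1 := Nat.cast_nonneg _
  have hy : (0:ℝ) ≤ p.2 := Nat.cast_nonneg _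
  unfold fA5
  apply one_div_le_one_div_of_le (by positivity)
  exact bnd_lin1 hx hy (by nlinarith) (by linarith) (by linarith)

lemma sfA6 : Summable fA6 := by
  refine summable_of_D (fun p ↦ by unfold fA6; positivity) (fun p ↦ ?_)
  have hx : (0:ℝ) ≤ p.1 := Nat.cast_nonneg _
  have hy : (0:ℝ) ≤ p.2 := Nat.cast_nonneg _
  unfold fA6
  apply one_div_le_one_div_of_le (by positivity)
  exact bnd_lin1 hx hy (by nlinarith) (by linarith) (by linarith)

lemma sfB3 : Summable fB3 := by
  refine summable_of_D (fun p ↦ by unfold fB3; positivity) (fun p ↦ ?_)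
  have hx : (0:ℝ) ≤ p.1 := Nat.cast_nonneg _
  have hy : (0:ℝ) ≤ p.2 := Nat.cast_nonneg _
  unfold fB3
  apply one_div_le_one_div_of_le (by positivity)
  exact bnd_lin1 hx hy (by nlinarith) (by linarith) (by linarith)

lemma sfC9 : Summable fC9 := by
  refine summable_of_D (fun p ↦ by unfold fC9; positivity) (fun p ↦ ?_)
  have hx : (0:ℝ) ≤ p.1 := Nat.cast_nonneg _
  have hy : (0:ℝ) ≤ p.2 := Nat.cast_nonneg _
  unfold fC9
  apply one_div_le_one_div_of_le (by positivity)
  exact bnd_C hx hy (by nlinarith) (by linarith) (by linarith)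

lemma sfCE : Summable fCE := by
  refine summable_of_D (fun p ↦ by unfold fCE; positivity) (fun p ↦ ?_)
  have hx : (0:ℝ) ≤ p.1 := Nat.cast_nonneg _
  have hy : (0:ℝ) ≤ p.2 := Nat.cast_nonneg _
  unfold fCE
  apply one_div_le_one_div_of_le (by positivity)
  exact bnd_C hx hy (by nlinarith) (by linarith) (by linarith)

lemma sfCO : Summable fCO := by
  refine summable_of_D (fun p ↦ by unfold fCO; positivity) (fun p ↦ ?_)
  have hx : (0:ℝ) ≤ p.1 := Nat.cast_nonneg _
  have hy : (0:ℝ) ≤ p.2 := Nat.cast_nonneg _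
  unfold fCO
  apply one_div_le_one_div_of_le (by positivity)
  exact bnd_C hx hy (by nlinarith) (by linarith) (by linarith)


-- ===== single sums =====
noncomputable def lo (s : ℕ) : ℝ := ∑' i : ℕ, (1:ℝ)/(2*(i:ℝ)+1)^s
noncomputable def ev (s : ℕ) : ℝ := ∑' i : ℕ, (1:ℝ)/(2*(i:ℝ)+2)^s

lemma summable_lo {s : ℕ} (hs : 2 ≤ s) : Summable (fun i : ℕ ↦ (1:ℝ)/(2*(i:ℝ)+1)^s) := by
  refine Summable.of_nonneg_of_le (fun i ↦ by positivity) (fun i ↦ ?_) (summable_inv_add_pow hs)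
  apply one_div_le_one_div_of_le (by positivity)
  apply pow_le_pow_left₀ (by positivity)
  have : (0:ℝ) ≤ i := Nat.cast_nonneg i
  linarith

lemma summable_ev {s : ℕ} (hs : 2 ≤ s) : Summable (fun i : ℕ ↦ (1:ℝ)/(2*(i:ℝ)+2)^s) := by
  refine Summable.of_nonneg_of_le (fun i ↦ by positivity) (fun i ↦ ?_) (summable_inv_add_pow hs)
  apply one_div_le_one_div_of_le (by positivity)
  apply pow_le_pow_left₀ (by positivity)
  have : (0:ℝ) ≤ i := Nat.cast_nonneg i
  linarith

lemma tsum_prod_mul {f g : ℕ → ℝ} (hf : Summable f) (hg : Summable g)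
    (hf0 : ∀ i, 0 ≤ f i) (hg0 : ∀ i, 0 ≤ g i) :
    ∑' p : ℕ×ℕ, f p.1 * g p.2 = (∑' i, f i) * (∑' j, g j) := by
  have hs : Summable (fun p : ℕ×ℕ ↦ f p.1 * g p.2) :=
    hf.mul_of_nonneg hg (Pi.le_def.mpr hf0) (Pi.le_def.mpr hg0)
  rw [Summable.tsum_prod' hs hs.prod_factor]
  calc ∑' i, ∑' j, f i * g j = ∑' i : ℕ, f i * ∑' j, g j := tsum_congr (fun i ↦ tsum_mul_left)
  _ = (∑' i, f i) * (∑' j, g j) := tsum_mul_right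

-- ===== R1, R2 =====

lemma relR1 : lo 2 * ev 3 = A1 + A2 := by
  set F : ℕ×ℕ → ℝ := fun p ↦ 1/((2*(p.1:ℝ)+1)^2*(2*(p.2:ℝ)+2)^3) with hF
  have hf := summable_lo (s := 2) (by norm_num)
  have hg := summable_ev (s := 3) (by norm_num)
  have hf0 : ∀ i : ℕ, (0:ℝ) ≤ 1/(2*(i:ℝ)+1)^2 := fun i ↦ by positivity
  have hg0 : ∀ i : ℕ, (0:ℝ) ≤ 1/(2*(i:ℝ)+2)^3 := fun i ↦ by positivity
  have hFs : Summable F :=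
    (hf.mul_of_nonneg hg (Pi.le_def.mpr hf0) (Pi.le_def.mpr hg0)).congr
      (fun p ↦ by rw [hF]; rw [div_mul_div_comm, one_mul])
  have e1 : lo 2 * ev 3 = ∑' p : ℕ×ℕ, F p := by
    unfold lo ev
    rw [← tsum_prod_mul hf hg hf0 hg0]
    exact tsum_congr (fun p ↦ by rw [hF]; rw [div_mul_div_comm, one_mul])
  have e2 : ∑' p : ℕ×ℕ, F (p.1, p.1+p.2) = A1 :=
    tsum_congr (fun p ↦ by rw [hF]; unfold fA1; congr 1; push_cast; ring)
  have e3 : ∑' p : ℕ×ℕ, F (p.1+p.2+1, p.1) = A2 :=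
    tsum_congr (fun p ↦ by rw [hF]; unfold fA2; congr 1; push_cast; ring)
  rw [e1, tsum_split hFs, e2, e3]

lemma relR2 : lo 3 * ev 2 = A3 + A4 := by
  set F : ℕ×ℕ → ℝ := fun p ↦ 1/((2*(p.1:ℝ)+1)^3*(2*(p.2:ℝ)+2)^2) with hF
  have hf := summable_lo (s := 3) (by norm_num)
  have hg := summable_ev (s := 2) (by norm_num)
  have hf0 : ∀ i : ℕ, (0:ℝ) ≤ 1/(2*(i:ℝ)+1)^3 := fun i ↦ by positivity
  have hg0 : ∀ i : ℕ, (0:ℝ) ≤ 1/(2*(i:ℝ)+2)^2 := fun i ↦ by positivity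
  have hFs : Summable F :=
    (hf.mul_of_nonneg hg (Pi.le_def.mpr hf0) (Pi.le_def.mpr hg0)).congr
      (fun p ↦ by rw [hF]; rw [div_mul_div_comm, one_mul])
  have e1 : lo 3 * ev 2 = ∑' p : ℕ×ℕ, F p := by
    unfold lo ev
    rw [← tsum_prod_mul hf hg hf0 hg0]
    exact tsum_congr (fun p ↦ by rw [hF]; rw [div_mul_div_comm, one_mul])
  have e2 : ∑' p : ℕ×ℕ, F (p.1, p.1+p.2) = A3 :=
    tsum_congr (fun p ↦ by rw [hF]; unfold fA3; congr 1; push_cast; ring)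
  have e3 : ∑' p : ℕ×ℕ, F (p.1+p.2+1, p.1) = A4 :=
    tsum_congr (fun p ↦ by rw [hF]; unfold fA4; congr 1; push_cast; ring)
  rw [e1, tsum_split hFs, e2, e3]

-- ===== R3 =====

lemma relR3 : lo 3 * lo 2 = B1 + lo 5 + B2 := by
  set F : ℕ×ℕ → ℝ := fun p ↦ 1/((2*(p.1:ℝ)+1)^3*(2*(p.2:ℝ)+1)^2) with hF
  have hf := summable_lo (s := 3) (by norm_num)
  have hg := summable_lo (s := 2) (by norm_num)
  have hf0 : ∀ i : ℕ, (0:ℝ) ≤ 1/(2*(i:ℝ)+1)^3 := fun i ↦ by positivity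
  have hg0 : ∀ i : ℕ, (0:ℝ) ≤ 1/(2*(i:ℝ)+1)^2 := fun i ↦ by positivity
  have hFs : Summable F :=
    (hf.mul_of_nonneg hg (Pi.le_def.mpr hf0) (Pi.le_def.mpr hg0)).congr
      (fun p ↦ by rw [hF]; rw [div_mul_div_comm, one_mul])
  have e1 : lo 3 * lo 2 = ∑' p : ℕ×ℕ, F p := by
    unfold lo
    rw [← tsum_prod_mul hf hg hf0 hg0]
    exact tsum_congr (fun p ↦ by rw [hF]; rw [div_mul_div_comm, one_mul])
  -- lower triangle part
  have hGs : Summable (fun p : ℕ×ℕ ↦ F (p.1, p.1+p.2)) :=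
    hFs.comp_injective (i := fun p : ℕ×ℕ ↦ (p.1, p.1+p.2))
      (by intro p q hpq
          simp only [Prod.mk.injEq] at hpq
          exact Prod.ext hpq.1 (by omega))
  have e2 : ∑' p : ℕ×ℕ, F (p.1, p.1+p.2) = lo 5 + B2 := by
    rw [tsum_peel hGs]
    have d1 : ∑' i : ℕ, F (i, i+0) = lo 5 :=
      tsum_congr (fun i ↦ by rw [hF]; congr 1; push_cast; ring)
    have d2 : ∑' p : ℕ×ℕ, F (p.1, p.1+(p.2+1)) = B2 :=
      tsum_congr (fun p ↦ by rw [hF]; unfold fB2; congr 1; push_cast; ring)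
    rw [d1, d2]
  have e3 : ∑' p : ℕ×ℕ, F (p.1+p.2+1, p.1) = B1 :=
    tsum_congr (fun p ↦ by rw [hF]; unfold fB1; congr 1; push_cast; ring)
  rw [e1, tsum_split hFs, e2, e3]
  ring

-- ===== partial fraction identities =====
set_option maxHeartbeats 1000000 in
lemma pfOE (a b : ℝ) (ha : 0 ≤ a) (hb : 0 ≤ b) :
    1/((2*a+1)^2*(2*b+2)^3)
      = 1/((2*a+2*b+3)^3*(2*a+1)^2) + 3*(1/((2*a+2*b+3)^4*(2*a+1)))
        + 1/((2*b+2*a+3)^2*(2*b+2)^3) + 2*(1/((2*b+2*a+3)^3*(2*b+2)^2))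
        + 3*(1/((2*b+2*a+3)^4*(2*b+2))) := by
  have h1 : (2*a+1) ≠ 0 := by positivity
  have h2 : (2*b+2) ≠ 0 := by positivity
  have h3 : (2*a+2*b+3) ≠ 0 := by positivity
  have h4 : (2*b+2*a+3) ≠ 0 := by positivity
  field_simp
  ring

set_option maxHeartbeats 1000000 in
lemma pfEO (a b : ℝ) (ha : 0 ≤ a) (hb : 0 ≤ b) :
    1/((2*a+2)^2*(2*b+1)^3)
      = 1/((2*a+2*b+3)^3*(2*a+2)^2) + 3*(1/((2*a+2*b+3)^4*(2*a+2)))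
        + 1/((2*b+2*a+3)^2*(2*b+1)^3) + 2*(1/((2*b+2*a+3)^3*(2*b+1)^2))
        + 3*(1/((2*b+2*a+3)^4*(2*b+1))) := by
  have h1 : (2*a+2) ≠ 0 := by positivity
  have h2 : (2*b+1) ≠ 0 := by positivity
  have h3 : (2*a+2*b+3) ≠ 0 := by positivity
  have h4 : (2*b+2*a+3) ≠ 0 := by positivity
  field_simp
  ring

set_option maxHeartbeats 1000000 in
lemma pfOO (a b : ℝ) (ha : 0 ≤ a) (hb : 0 ≤ b) :
    1/((2*a+1)^2*(2*b+1)^3)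
      = 1/((2*a+2*b+2)^3*(2*a+1)^2) + 3*(1/((2*a+2*b+2)^4*(2*a+1)))
        + 1/((2*b+2*a+2)^2*(2*b+1)^3) + 2*(1/((2*b+2*a+2)^3*(2*b+1)^2))
        + 3*(1/((2*b+2*a+2)^4*(2*b+1))) := by
  have h1 : (2*a+1) ≠ 0 := by positivity
  have h2 : (2*b+1) ≠ 0 := by positivity
  have h3 : (2*a+2*b+2) ≠ 0 := by positivity
  have h4 : (2*b+2*a+2) ≠ 0 := by positivity
  field_simp
  ring

-- swapped HasSums
lemma hsA2swap : HasSum (fun p : ℕ×ℕ ↦ fA2 (p.2, p.1)) A2 :=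
  ((Equiv.prodComm ℕ ℕ).hasSum_iff (f := fA2)).2 sfA2.hasSum
lemma hsA4swap : HasSum (fun p : ℕ×ℕ ↦ fA4 (p.2, p.1)) A4 :=
  ((Equiv.prodComm ℕ ℕ).hasSum_iff (f := fA4)).2 sfA4.hasSum
lemma hsA6swap : HasSum (fun p : ℕ×ℕ ↦ fA6 (p.2, p.1)) A6 :=
  ((Equiv.prodComm ℕ ℕ).hasSum_iff (f := fA6)).2 sfA6.hasSum
lemma hsA1swap : HasSum (fun p : ℕ×ℕ ↦ fA1 (p.2, p.1)) A1 :=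
  ((Equiv.prodComm ℕ ℕ).hasSum_iff (f := fA1)).2 sfA1.hasSum
lemma hsA3swap : HasSum (fun p : ℕ×ℕ ↦ fA3 (p.2, p.1)) A3 :=
  ((Equiv.prodComm ℕ ℕ).hasSum_iff (f := fA3)).2 sfA3.hasSum
lemma hsA5swap : HasSum (fun p : ℕ×ℕ ↦ fA5 (p.2, p.1)) A5 :=
  ((Equiv.prodComm ℕ ℕ).hasSum_iff (f := fA5)).2 sfA5.hasSum
lemma hsB1swap : HasSum (fun p : ℕ×ℕ ↦ fB1 (p.2, p.1)) B1 :=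
  ((Equiv.prodComm ℕ ℕ).hasSum_iff (f := fB1)).2 sfB1.hasSum
lemma hsB2swap : HasSum (fun p : ℕ×ℕ ↦ fB2 (p.2, p.1)) B2 :=
  ((Equiv.prodComm ℕ ℕ).hasSum_iff (f := fB2)).2 sfB2.hasSum
lemma hsB3swap : HasSum (fun p : ℕ×ℕ ↦ fB3 (p.2, p.1)) B3 :=
  ((Equiv.prodComm ℕ ℕ).hasSum_iff (f := fB3)).2 sfB3.hasSum

lemma relR4 : lo 2 * ev 3 = B1 + 3*B3 + A2 + 2*A4 + 3*A6 := by
  have hbig : HasSum (fun p : ℕ×ℕ ↦ fB1 p + 3*fB3 p + fA2 (p.2,p.1) + 2*fA4 (p.2,p.1)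
      + 3*fA6 (p.2,p.1)) (B1 + 3*B3 + A2 + 2*A4 + 3*A6) :=
    ((((sfB1.hasSum.add (sfB3.hasSum.mul_left 3)).add hsA2swap).add
      (hsA4swap.mul_left 2)).add (hsA6swap.mul_left 3))
  have heq : (fun p : ℕ×ℕ ↦ fB1 p + 3*fB3 p + fA2 (p.2,p.1) + 2*fA4 (p.2,p.1) + 3*fA6 (p.2,p.1))
      = (fun p : ℕ×ℕ ↦ 1/((2*(p.1:ℝ)+1)^2*(2*(p.2:ℝ)+2)^3)) := by
    funext p
    have h := pfOE (p.1:ℝ) (p.2:ℝ) (Nat.cast_nonneg _) (Nat.cast_nonneg _)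
    unfold fB1 fB3 fA2 fA4 fA6
    simp only
    linarith [h]
  have hFs : HasSum (fun p : ℕ×ℕ ↦ 1/((2*(p.1:ℝ)+1)^2*(2*(p.2:ℝ)+2)^3))
      (B1 + 3*B3 + A2 + 2*A4 + 3*A6) := heq ▸ hbig
  have hf := summable_lo (s := 2) (by norm_num)
  have hg := summable_ev (s := 3) (by norm_num)
  have hf0 : ∀ i : ℕ, (0:ℝ) ≤ 1/(2*(i:ℝ)+1)^2 := fun i ↦ by positivity
  have hg0 : ∀ i : ℕ, (0:ℝ) ≤ 1/(2*(i:ℝ)+2)^3 := fun i ↦ by positivity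
  have e1 : lo 2 * ev 3 = ∑' p : ℕ×ℕ, 1/((2*(p.1:ℝ)+1)^2*(2*(p.2:ℝ)+2)^3) := by
    unfold lo ev
    rw [← tsum_prod_mul hf hg hf0 hg0]
    exact tsum_congr (fun p ↦ by rw [div_mul_div_comm, one_mul])
  rw [e1, hFs.tsum_eq]

lemma relR5 : ev 2 * lo 3 = A4 + 3*A6 + B2 + 2*B1 + 3*B3 := by
  have hbig : HasSum (fun p : ℕ×ℕ ↦ fA4 p + 3*fA6 p + fB2 (p.2,p.1) + 2*fB1 (p.2,p.1)
      + 3*fB3 (p.2,p.1)) (A4 + 3*A6 + B2 + 2*B1 + 3*B3) :=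
    ((((sfA4.hasSum.add (sfA6.hasSum.mul_left 3)).add hsB2swap).add
      (hsB1swap.mul_left 2)).add (hsB3swap.mul_left 3))
  have heq : (fun p : ℕ×ℕ ↦ fA4 p + 3*fA6 p + fB2 (p.2,p.1) + 2*fB1 (p.2,p.1) + 3*fB3 (p.2,p.1))
      = (fun p : ℕ×ℕ ↦ 1/((2*(p.1:ℝ)+2)^2*(2*(p.2:ℝ)+1)^3)) := by
    funext p
    have h := pfEO (p.1:ℝ) (p.2:ℝ) (Nat.cast_nonneg _) (Nat.cast_nonneg _)
    unfold fA4 fA6 fB2 fB1 fB3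
    simp only
    linarith [h]
  have hFs : HasSum (fun p : ℕ×ℕ ↦ 1/((2*(p.1:ℝ)+2)^2*(2*(p.2:ℝ)+1)^3))
      (A4 + 3*A6 + B2 + 2*B1 + 3*B3) := heq ▸ hbig
  have hf := summable_ev (s := 2) (by norm_num)
  have hg := summable_lo (s := 3) (by norm_num)
  have hf0 : ∀ i : ℕ, (0:ℝ) ≤ 1/(2*(i:ℝ)+2)^2 := fun i ↦ by positivity
  have hg0 : ∀ i : ℕ, (0:ℝ) ≤ 1/(2*(i:ℝ)+1)^3 := fun i ↦ by positivity
  have e1 : ev 2 * lo 3 = ∑' p : ℕ×ℕ, 1/((2*(p.1:ℝ)+2)^2*(2*(p.2:ℝ)+1)^3) := by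
    unfold lo ev
    rw [← tsum_prod_mul hf hg hf0 hg0]
    exact tsum_congr (fun p ↦ by rw [div_mul_div_comm, one_mul])
  rw [e1, hFs.tsum_eq]

lemma relR6 : lo 2 * lo 3 = A1 + 3*A5 + A3 + 2*A1 + 3*A5 := by
  have hbig : HasSum (fun p : ℕ×ℕ ↦ fA1 p + 3*fA5 p + fA3 (p.2,p.1) + 2*fA1 (p.2,p.1)
      + 3*fA5 (p.2,p.1)) (A1 + 3*A5 + A3 + 2*A1 + 3*A5) :=
    ((((sfA1.hasSum.add (sfA5.hasSum.mul_left 3)).add hsA3swap).add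
      (hsA1swap.mul_left 2)).add (hsA5swap.mul_left 3))
  have heq : (fun p : ℕ×ℕ ↦ fA1 p + 3*fA5 p + fA3 (p.2,p.1) + 2*fA1 (p.2,p.1) + 3*fA5 (p.2,p.1))
      = (fun p : ℕ×ℕ ↦ 1/((2*(p.1:ℝ)+1)^2*(2*(p.2:ℝ)+1)^3)) := by
    funext p
    have h := pfOO (p.1:ℝ) (p.2:ℝ) (Nat.cast_nonneg _) (Nat.cast_nonneg _)
    unfold fA1 fA5 fA3
    simp only
    linarith [h]
  have hFs : HasSum (fun p : ℕ×ℕ ↦ 1/((2*(p.1:ℝ)+1)^2*(2*(p.2:ℝ)+1)^3))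
      (A1 + 3*A5 + A3 + 2*A1 + 3*A5) := heq ▸ hbig
  have hf := summable_lo (s := 2) (by norm_num)
  have hg := summable_lo (s := 3) (by norm_num)
  have hf0 : ∀ i : ℕ, (0:ℝ) ≤ 1/(2*(i:ℝ)+1)^2 := fun i ↦ by positivity
  have hg0 : ∀ i : ℕ, (0:ℝ) ≤ 1/(2*(i:ℝ)+1)^3 := fun i ↦ by positivity
  have e1 : lo 2 * lo 3 = ∑' p : ℕ×ℕ, 1/((2*(p.1:ℝ)+1)^2*(2*(p.2:ℝ)+1)^3) := by
    unfold lo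
    rw [← tsum_prod_mul hf hg hf0 hg0]
    exact tsum_congr (fun p ↦ by rw [div_mul_div_comm, one_mul])
  rw [e1, hFs.tsum_eq]


-- ===== triangle with weight factoring =====
lemma tsum_triangle_mul {w u : ℕ → ℝ} (hs : Summable (fun p : ℕ×ℕ ↦ w (p.1+p.2) * u p.1)) :
    ∑' p : ℕ×ℕ, w (p.1+p.2) * u p.1 = ∑' j : ℕ, w j * ∑ i ∈ Finset.range (j+1), u i := by
  rw [tsum_triangle (F := fun i j ↦ w j * u i) hs]
  exact tsum_congr (fun j ↦ (Finset.mul_sum _ _ _).symm)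

-- outer comparison
lemma summable_out {f : ℕ → ℝ} (h0 : ∀ j, 0 ≤ f j) (hle : ∀ j, f j ≤ 1/((j:ℝ)+1)^3) :
    Summable f :=
  Summable.of_nonneg_of_le h0 hle (summable_inv_add_pow (by norm_num))

lemma harm_card_bound {c : ℕ → ℝ} (hc : ∀ i, 1 ≤ c i) (n : ℕ) :
    ∑ i ∈ Finset.range n, 1/(c i) ≤ n := by
  calc ∑ i ∈ Finset.range n, 1/(c i) ≤ ∑ i ∈ Finset.range n, 1 := by
        refine Finset.sum_le_sum (fun i _ ↦ ?_)
        have h1 : (0:ℝ) < c i := lt_of_lt_of_le one_pos (hc i)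
        rw [div_le_one h1]
        exact hc i
  _ = n := by simp

-- A5, A6, B3 as iterated sums
lemma A5_iter : A5 = ∑' j : ℕ, (1/(2*(j:ℝ)+2)^4) * ∑ i ∈ Finset.range (j+1), (1:ℝ)/(2*(i:ℝ)+1) := by
  have hs : Summable (fun p : ℕ×ℕ ↦ (1/(2*((p.1+p.2 : ℕ):ℝ)+2)^4) * (1/(2*(p.1:ℝ)+1))) :=
    sfA5.congr (fun p ↦ by
      unfold fA5
      rw [div_mul_div_comm, one_mul]
      congr 1
      push_cast
      ring)
  have := tsum_triangle_mul (w := fun j ↦ 1/(2*(j:ℝ)+2)^4) (u := fun i ↦ (1:ℝ)/(2*(i:ℝ)+1)) hs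
  rw [← this]
  unfold A5
  exact tsum_congr (fun p ↦ by
    unfold fA5
    rw [div_mul_div_comm, one_mul]
    congr 1
    push_cast
    ring)

lemma A6_iter : A6 = ∑' j : ℕ, (1/(2*(j:ℝ)+3)^4) * ∑ i ∈ Finset.range (j+1), (1:ℝ)/(2*(i:ℝ)+2) := by
  have hs : Summable (fun p : ℕ×ℕ ↦ (1/(2*((p.1+p.2 : ℕ):ℝ)+3)^4) * (1/(2*(p.1:ℝ)+2))) :=
    sfA6.congr (fun p ↦ by
      unfold fA6
      rw [div_mul_div_comm, one_mul]
      congr 1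
      push_cast
      ring)
  have := tsum_triangle_mul (w := fun j ↦ 1/(2*(j:ℝ)+3)^4) (u := fun i ↦ (1:ℝ)/(2*(i:ℝ)+2)) hs
  rw [← this]
  unfold A6
  exact tsum_congr (fun p ↦ by
    unfold fA6
    rw [div_mul_div_comm, one_mul]
    congr 1
    push_cast
    ring)

lemma B3_iter : B3 = ∑' j : ℕ, (1/(2*(j:ℝ)+3)^4) * ∑ i ∈ Finset.range (j+1), (1:ℝ)/(2*(i:ℝ)+1) := by
  have hs : Summable (fun p : ℕ×ℕ ↦ (1/(2*((p.1+p.2 : ℕ):ℝ)+3)^4) * (1/(2*(p.1:ℝ)+1))) :=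
    sfB3.congr (fun p ↦ by
      unfold fB3
      rw [div_mul_div_comm, one_mul]
      congr 1
      push_cast
      ring)
  have := tsum_triangle_mul (w := fun j ↦ 1/(2*(j:ℝ)+3)^4) (u := fun i ↦ (1:ℝ)/(2*(i:ℝ)+1)) hs
  rw [← this]
  unfold B3
  exact tsum_congr (fun p ↦ by
    unfold fB3
    rw [div_mul_div_comm, one_mul]
    congr 1
    push_cast
    ring)

-- ===== R9 =====
lemma tele9 (a b : ℝ) (ha : 0 ≤ a) (hb : 0 ≤ b) :
    1/((2*a+2*b+3)^2*(2*a+2)^3) + 1/((2*a+2*b+3)^3*(2*a+2)^2)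
      + 1/((2*a+2*b+3)^4*(2*a+2)) + 1/((2*b+2*a+3)^4*(2*b+1))
    = 1/((2*b+1)*(2*a+2*b+3)*(2*a+2)^3) := by
  have h1 : (2*a+2) ≠ 0 := by positivity
  have h2 : (2*b+1) ≠ 0 := by positivity
  have h3 : (2*a+2*b+3) ≠ 0 := by positivity
  have h4 : (2*b+2*a+3) ≠ 0 := by positivity
  field_simp
  ring

lemma fC9_eval (a : ℕ) :
    ∑' b : ℕ, fC9 (a, b)
      = (1/(2*(a:ℝ)+2)^4) * ∑ t ∈ Finset.range (a+1), (1:ℝ)/(2*(t:ℝ)+1) := by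
  have key : ∀ b : ℕ, fC9 (a, b)
      = (1/(2*(a:ℝ)+2)^4) * ((1:ℝ)/(2*(b:ℝ)+1) - 1/(2*(b:ℝ)+2*((a:ℕ)+1:ℕ)+1)) := by
    intro b
    unfold fC9
    have h1 : (2*(a:ℝ)+2) ≠ 0 := by positivity
    have h2 : (2*(b:ℝ)+1) ≠ 0 := by positivity
    have h3 : (2*(a:ℝ)+2*(b:ℝ)+3) ≠ 0 := by positivity
    push_cast
    field_simp
    ring
  rw [tsum_congr key, tsum_mul_left]
  congr 1
  rw [← tel_odd (a+1)]

lemma relR9 : A2 + A4 + A6 + B3 = A5 := by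
  have hbig : HasSum (fun p : ℕ×ℕ ↦ fA2 p + fA4 p + fA6 p + fB3 (p.2,p.1))
      (A2 + A4 + A6 + B3) :=
    ((sfA2.hasSum.add sfA4.hasSum).add sfA6.hasSum).add hsB3swap
  have heq : (fun p : ℕ×ℕ ↦ fA2 p + fA4 p + fA6 p + fB3 (p.2,p.1)) = fC9 := by
    funext p
    have h := tele9 (p.1:ℝ) (p.2:ℝ) (Nat.cast_nonneg _) (Nat.cast_nonneg _)
    unfold fA2 fA4 fA6 fB3 fC9
    simp only
    linarith [h]
  have hC9 : HasSum fC9 (A2 + A4 + A6 + B3) := heq ▸ hbig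
  have e1 : ∑' p : ℕ×ℕ, fC9 p = A5 := by
    rw [Summable.tsum_prod' sfC9 sfC9.prod_factor, tsum_congr fC9_eval, A5_iter]
  rw [← hC9.tsum_eq, e1]

-- ===== R11 =====
lemma teleE (a b : ℝ) (ha : 0 ≤ a) (hb : 0 ≤ b) :
    1/((2*a+2*b+2)^2*(2*a+1)^3) + 1/((2*a+2*b+2)^3*(2*a+1)^2)
      + 1/((2*a+2*b+2)^4*(2*a+1)) + 1/((2*b+2*a+2)^4*(2*b+1))
    = 1/((2*b+1)*(2*a+2*b+2)*(2*a+1)^3) := by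
  have h1 : (2*a+1) ≠ 0 := by positivity
  have h2 : (2*b+1) ≠ 0 := by positivity
  have h3 : (2*a+2*b+2) ≠ 0 := by positivity
  have h4 : (2*b+2*a+2) ≠ 0 := by positivity
  field_simp
  ring

lemma teleO (a b : ℝ) (ha : 0 ≤ a) (hb : 0 ≤ b) :
    1/((2*a+2*b+3)^2*(2*a+1)^3) + 1/((2*a+2*b+3)^3*(2*a+1)^2)
      + 1/((2*a+2*b+3)^4*(2*a+1)) + 1/((2*b+2*a+3)^4*(2*b+2))
    = 1/((2*b+2)*(2*a+2*b+3)*(2*a+1)^3) := by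
  have h1 : (2*a+1) ≠ 0 := by positivity
  have h2 : (2*b+2) ≠ 0 := by positivity
  have h3 : (2*a+2*b+3) ≠ 0 := by positivity
  have h4 : (2*b+2*a+3) ≠ 0 := by positivity
  field_simp
  ring

lemma hCE : HasSum fCE (A3 + A1 + A5 + A5) := by
  have hbig : HasSum (fun p : ℕ×ℕ ↦ fA3 p + fA1 p + fA5 p + fA5 (p.2,p.1))
      (A3 + A1 + A5 + A5) :=
    ((sfA3.hasSum.add sfA1.hasSum).add sfA5.hasSum).add hsA5swap
  have heq : (fun p : ℕ×ℕ ↦ fA3 p + fA1 p + fA5 p + fA5 (p.2,p.1)) = fCE := by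
    funext p
    have h := teleE (p.1:ℝ) (p.2:ℝ) (Nat.cast_nonneg _) (Nat.cast_nonneg _)
    unfold fA3 fA1 fA5 fCE
    simp only
    linarith [h]
  exact heq ▸ hbig

lemma hCO : HasSum fCO (B2 + B1 + B3 + A6) := by
  have hbig : HasSum (fun p : ℕ×ℕ ↦ fB2 p + fB1 p + fB3 p + fA6 (p.2,p.1))
      (B2 + B1 + B3 + A6) :=
    ((sfB2.hasSum.add sfB1.hasSum).add sfB3.hasSum).add hsA6swap
  have heq : (fun p : ℕ×ℕ ↦ fB2 p + fB1 p + fB3 p + fA6 (p.2,p.1)) = fCO := by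
    funext p
    have h := teleO (p.1:ℝ) (p.2:ℝ) (Nat.cast_nonneg _) (Nat.cast_nonneg _)
    unfold fB2 fB1 fB3 fA6 fCO
    simp only
    linarith [h]
  exact heq ▸ hbig

lemma Hsplit (a : ℕ) : ∑ t ∈ Finset.range (2*a+1), (1:ℝ)/((t:ℝ)+1)
    = ∑ s ∈ Finset.range (a+1), (1:ℝ)/(2*(s:ℝ)+1)
      + ∑ s ∈ Finset.range a, (1:ℝ)/(2*(s:ℝ)+2) := by
  induction a with
  | zero => simp
  | succ a ih =>
      rw [show 2*(a+1)+1 = (2*a+1)+1+1 from by omega, Finset.sum_range_succ,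
        Finset.sum_range_succ, ih,
        Finset.sum_range_succ (f := fun s : ℕ ↦ (1:ℝ)/(2*(s:ℝ)+1)) (n := a+1),
        Finset.sum_range_succ (f := fun s : ℕ ↦ (1:ℝ)/(2*(s:ℝ)+2)) (n := a),
        Finset.sum_range_succ (f := fun s : ℕ ↦ (1:ℝ)/(2*(s:ℝ)+1)) (n := a)]
      push_cast
      ring

lemma fCECO_eval (a : ℕ) :
    (∑' b : ℕ, fCE (a, b)) + (∑' b : ℕ, fCO (a, b))
      = (1/(2*(a:ℝ)+1)^4) * ∑ t ∈ Finset.range (2*a+1), (1:ℝ)/((t:ℝ)+1) := by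
  set fD : ℕ → ℝ := fun d ↦ (1:ℝ)/((d:ℝ)+1) - 1/((d:ℝ)+2*(a:ℝ)+2) with hfD
  have keyE : ∀ b : ℕ, fCE (a, b) = (1/(2*(a:ℝ)+1)^4) * fD (2*b) := by
    intro b
    rw [hfD]
    unfold fCE
    have h1 : (2*(a:ℝ)+1) ≠ 0 := by positivity
    have h2 : (2*(b:ℝ)+1) ≠ 0 := by positivity
    have h3 : (2*(a:ℝ)+2*(b:ℝ)+2) ≠ 0 := by positivity
    push_cast
    field_simp
    ring
  have keyO : ∀ b : ℕ, fCO (a, b) = (1/(2*(a:ℝ)+1)^4) * fD (2*b+1) := by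
    intro b
    rw [hfD]
    unfold fCO
    have h1 : (2*(a:ℝ)+1) ≠ 0 := by positivity
    have h2 : (2*(b:ℝ)+2) ≠ 0 := by positivity
    have h3 : (2*(a:ℝ)+2*(b:ℝ)+3) ≠ 0 := by positivity
    push_cast
    field_simp
    ring
  have hSe : Summable (fun b : ℕ ↦ fD (2*b)) := by
    have := (sfCE.prod_factor a).mul_left ((2*(a:ℝ)+1)^4)
    refine this.congr (fun b ↦ ?_)
    rw [keyE b]
    have h1 : (2*(a:ℝ)+1) ≠ 0 := by positivity
    field_simp
  have hSo : Summable (fun b : ℕ ↦ fD (2*b+1)) := by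
    have := (sfCO.prod_factor a).mul_left ((2*(a:ℝ)+1)^4)
    refine this.congr (fun b ↦ ?_)
    rw [keyO b]
    have h1 : (2*(a:ℝ)+1) ≠ 0 := by positivity
    field_simp
  have hmerge := tsum_even_add_odd hSe hSo
  have hD : ∑' d : ℕ, fD d = ∑ t ∈ Finset.range (2*a+1), (1:ℝ)/((t:ℝ)+1) := by
    rw [← tel_nat (2*a+1)]
    exact tsum_congr (fun d ↦ by rw [hfD]; push_cast; ring)
  calc (∑' b : ℕ, fCE (a, b)) + (∑' b : ℕ, fCO (a, b))
      = (∑' b : ℕ, (1/(2*(a:ℝ)+1)^4) * fD (2*b))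
        + (∑' b : ℕ, (1/(2*(a:ℝ)+1)^4) * fD (2*b+1)) := by
        rw [tsum_congr keyE, tsum_congr keyO]
  _ = (1/(2*(a:ℝ)+1)^4) * ((∑' b : ℕ, fD (2*b)) + (∑' b : ℕ, fD (2*b+1))) := by
        rw [tsum_mul_left, tsum_mul_left]; ring
  _ = (1/(2*(a:ℝ)+1)^4) * ∑' d : ℕ, fD d := by rw [hmerge]
  _ = (1/(2*(a:ℝ)+1)^4) * ∑ t ∈ Finset.range (2*a+1), (1:ℝ)/((t:ℝ)+1) := by rw [hD]

noncomputable def g5 : ℕ → ℝ := fun a ↦ (1:ℝ)/(2*(a:ℝ)+1)^5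
noncomputable def gb : ℕ → ℝ := fun a ↦ (1/(2*(a:ℝ)+1)^4) * ∑ s ∈ Finset.range a, (1:ℝ)/(2*(s:ℝ)+1)
noncomputable def ga : ℕ → ℝ := fun a ↦ (1/(2*(a:ℝ)+1)^4) * ∑ s ∈ Finset.range a, (1:ℝ)/(2*(s:ℝ)+2)

lemma sg5 : Summable g5 := summable_lo (s := 5) (by norm_num)

lemma sgb : Summable gb := by
  refine summable_out (fun a ↦ ?_) (fun a ↦ ?_)
  · unfold gb
    have : (0:ℝ) ≤ ∑ s ∈ Finset.range a, (1:ℝ)/(2*(s:ℝ)+1) :=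
      Finset.sum_nonneg (fun s _ ↦ by positivity)
    positivity
  · unfold gb
    have ha : (0:ℝ) ≤ a := Nat.cast_nonneg a
    have hS : ∑ s ∈ Finset.range a, (1:ℝ)/(2*(s:ℝ)+1) ≤ a :=
      harm_card_bound (fun i ↦ by
        have : (0:ℝ) ≤ i := Nat.cast_nonneg i
        linarith) a
    have h1 : (1/(2*(a:ℝ)+1)^4) * ∑ s ∈ Finset.range a, (1:ℝ)/(2*(s:ℝ)+1)
        ≤ (1/(2*(a:ℝ)+1)^4) * a := by
      apply mul_le_mul_of_nonneg_left hS (by positivity)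
    refine h1.trans ?_
    rw [one_div_mul_eq_div, div_le_div_iff₀ (by positivity) (by positivity)]
    have h2 : ((a:ℝ)+1)^3 ≤ (2*(a:ℝ)+1)^3 := pow_le_pow_left₀ (by linarith) (by linarith) 3
    calc (a:ℝ) * ((a:ℝ)+1)^3 ≤ (2*(a:ℝ)+1) * (2*(a:ℝ)+1)^3 :=
          mul_le_mul (by linarith) h2 (by positivity) (by positivity)
    _ = 1 * (2*(a:ℝ)+1)^4 := by ring

lemma sga : Summable ga := by
  refine summable_out (fun a ↦ ?_) (fun a ↦ ?_)
  · unfold ga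
    have : (0:ℝ) ≤ ∑ s ∈ Finset.range a, (1:ℝ)/(2*(s:ℝ)+2) :=
      Finset.sum_nonneg (fun s _ ↦ by positivity)
    positivity
  · unfold ga
    have ha : (0:ℝ) ≤ a := Nat.cast_nonneg a
    have hS : ∑ s ∈ Finset.range a, (1:ℝ)/(2*(s:ℝ)+2) ≤ a :=
      harm_card_bound (fun i ↦ by
        have : (0:ℝ) ≤ i := Nat.cast_nonneg i
        linarith) a
    have h1 : (1/(2*(a:ℝ)+1)^4) * ∑ s ∈ Finset.range a, (1:ℝ)/(2*(s:ℝ)+2)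
        ≤ (1/(2*(a:ℝ)+1)^4) * a := by
      apply mul_le_mul_of_nonneg_left hS (by positivity)
    refine h1.trans ?_
    rw [one_div_mul_eq_div, div_le_div_iff₀ (by positivity) (by positivity)]
    have h2 : ((a:ℝ)+1)^3 ≤ (2*(a:ℝ)+1)^3 := pow_le_pow_left₀ (by linarith) (by linarith) 3
    calc (a:ℝ) * ((a:ℝ)+1)^3 ≤ (2*(a:ℝ)+1) * (2*(a:ℝ)+1)^3 :=
          mul_le_mul (by linarith) h2 (by positivity) (by positivity)
    _ = 1 * (2*(a:ℝ)+1)^4 := by ring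

lemma gb_eq : ∑' a : ℕ, gb a = B3 := by
  rw [Summable.tsum_eq_zero_add sgb]
  have h0 : gb 0 = 0 := by unfold gb; simp
  rw [h0, zero_add, B3_iter]
  exact tsum_congr (fun j ↦ by
    unfold gb
    congr 2
    push_cast
    ring)

lemma ga_eq : ∑' a : ℕ, ga a = A6 := by
  rw [Summable.tsum_eq_zero_add sga]
  have h0 : ga 0 = 0 := by unfold ga; simp
  rw [h0, zero_add, A6_iter]
  exact tsum_congr (fun j ↦ by
    unfold ga
    congr 2
    push_cast
    ring)

lemma relR11 : A3 + A1 + A5 + A5 + (B2 + B1 + B3 + A6) = lo 5 + B3 + A6 := by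
  have hL : HasSum (fun a : ℕ ↦ (∑' b : ℕ, fCE (a,b)) + (∑' b : ℕ, fCO (a,b)))
      ((A3 + A1 + A5 + A5) + (B2 + B1 + B3 + A6)) := by
    have h1 := hasSum_fiber hCE.summable
    have h2 := hasSum_fiber hCO.summable
    rw [hCE.tsum_eq] at h1
    rw [hCO.tsum_eq] at h2
    exact h1.add h2
  have hpt : ∀ a : ℕ, (∑' b : ℕ, fCE (a,b)) + (∑' b : ℕ, fCO (a,b)) = g5 a + gb a + ga a := by
    intro a
    rw [fCECO_eval a, Hsplit a, Finset.sum_range_succ]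
    unfold g5 gb ga
    have hu : (2*(a:ℝ)+1) ≠ 0 := by positivity
    field_simp
    ring
  have hR : HasSum (fun a : ℕ ↦ (∑' b : ℕ, fCE (a,b)) + (∑' b : ℕ, fCO (a,b)))
      (lo 5 + B3 + A6) := by
    have hg5 : HasSum g5 (lo 5) := sg5.hasSum
    have hgb : HasSum gb B3 := gb_eq ▸ sgb.hasSum
    have hga : HasSum ga A6 := ga_eq ▸ sga.hasSum
    have hsum := (hg5.add hgb).add hga
    have hfe : (fun a : ℕ ↦ (∑' b : ℕ, fCE (a,b)) + (∑' b : ℕ, fCO (a,b)))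
        = (fun a : ℕ ↦ g5 a + gb a + ga a) := funext hpt
    rw [hfe]
    exact hsum
  exact hL.unique hR

-- ===== A1 iterated =====
lemma A1_iter : A1 = ∑' j : ℕ, (1/(2*(j:ℝ)+2)^3) * ∑ i ∈ Finset.range (j+1), (1:ℝ)/(2*(i:ℝ)+1)^2 := by
  have hs : Summable (fun p : ℕ×ℕ ↦ (1/(2*((p.1+p.2 : ℕ):ℝ)+2)^3) * (1/(2*(p.1:ℝ)+1)^2)) :=
    sfA1.congr (fun p ↦ by
      unfold fA1
      rw [div_mul_div_comm, one_mul]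
      congr 1
      push_cast
      ring)
  have := tsum_triangle_mul (w := fun j ↦ 1/(2*(j:ℝ)+2)^3) (u := fun i ↦ (1:ℝ)/(2*(i:ℝ)+1)^2) hs
  rw [← this]
  unfold A1
  exact tsum_congr (fun p ↦ by
    unfold fA1
    rw [div_mul_div_comm, one_mul]
    congr 1
    push_cast
    ring)

-- ===== zeta values =====
lemma Zn_eq (m : ℕ) : Z m = ∑' k : ℕ, (1:ℝ)/((k:ℝ)+1)^m := by
  unfold Z
  rw [← Equiv.pnatEquivNat.symm.tsum_eq (fun n : ℕ+ ↦ (1:ℝ)/((n:ℕ):ℝ)^m)]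
  apply tsum_congr
  intro k
  simp only [Equiv.pnatEquivNat_symm_apply]
  norm_num [Nat.succPNat]

lemma split_Z {m : ℕ} (hm : 2 ≤ m) : lo m + ev m = Z m := by
  rw [Zn_eq]
  have hse : Summable (fun k : ℕ ↦ (1:ℝ)/(((2*k : ℕ):ℝ)+1)^m) :=
    (summable_lo hm).congr (fun k ↦ by push_cast; ring_nf)
  have hso : Summable (fun k : ℕ ↦ (1:ℝ)/(((2*k+1 : ℕ):ℝ)+1)^m) :=
    (summable_ev hm).congr (fun k ↦ by push_cast; ring_nf)
  have hh := tsum_even_add_odd (f := fun k : ℕ ↦ (1:ℝ)/((k:ℝ)+1)^m) hse hso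
  rw [← hh]
  unfold lo ev
  congr 1
  · exact tsum_congr (fun k ↦ by push_cast; ring_nf)
  · exact tsum_congr (fun k ↦ by push_cast; ring_nf)

lemma ev_val (m : ℕ) : ev m = (1/2^m) * Z m := by
  rw [Zn_eq]
  unfold ev
  rw [← tsum_mul_left]
  apply tsum_congr
  intro i
  rw [div_mul_div_comm, one_mul]
  congr 1
  rw [show (2*(i:ℝ)+2) = 2*((i:ℝ)+1) from by ring, mul_pow]

lemma A1_val : A1 = 35/32*(Z 2*Z 3) - 31/16*Z 5 := by
  have elo2 : lo 2 = 3/4*Z 2 := by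
    have h1 := split_Z (m := 2) (by norm_num)
    have h2 := ev_val 2
    norm_num at h2
    linarith
  have eev2 : ev 2 = 1/4*Z 2 := by
    have h2 := ev_val 2
    norm_num at h2
    linarith
  have elo3 : lo 3 = 7/8*Z 3 := by
    have h1 := split_Z (m := 3) (by norm_num)
    have h2 := ev_val 3
    norm_num at h2
    linarith
  have eev3 : ev 3 = 1/8*Z 3 := by
    have h2 := ev_val 3
    norm_num at h2
    linarith
  have elo5 : lo 5 = 31/32*Z 5 := by
    have h1 := split_Z (m := 5) (by norm_num)
    have h2 := ev_val 5
    norm_num at h2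
    linarith
  have r1 : 3/32*(Z 2*Z 3) = A1 + A2 := by rw [← relR1, elo2, eev3]; ring
  have r2 : 7/32*(Z 2*Z 3) = A3 + A4 := by rw [← relR2, elo3, eev2]; ring
  have r3 : 21/32*(Z 2*Z 3) = B1 + lo 5 + B2 := by rw [← relR3, elo3, elo2]; ring
  have r4 : 3/32*(Z 2*Z 3) = B1 + 3*B3 + A2 + 2*A4 + 3*A6 := by rw [← relR4, elo2, eev3]; ring
  have r5 : 7/32*(Z 2*Z 3) = A4 + 3*A6 + B2 + 2*B1 + 3*B3 := by rw [← relR5, eev2, elo3]; ring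
  have r6 : 21/32*(Z 2*Z 3) = A1 + 3*A5 + A3 + 2*A1 + 3*A5 := by rw [← relR6, elo2, elo3]; ring
  have r9 := relR9
  have r11 := relR11
  linarith [r1, r2, r3, r4, r5, r6, r9, r11, elo5]

end S11

theorem stmt11 :
    (∑' k : ℕ+, h 2 (k : ℕ) / ((k : ℕ) : ℝ) ^ 3) = 35 / 4 * Z 2 * Z 3 - 31 / 2 * Z 5 := by
  have hLHS : (∑' k : ℕ+, h 2 (k : ℕ) / ((k : ℕ) : ℝ) ^ 3) = 8 * S11.A1 := by
    rw [← Equiv.pnatEquivNat.symm.tsum_eq (fun k : ℕ+ ↦ h 2 (k : ℕ) / ((k : ℕ) : ℝ) ^ 3)]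
    have hpt : ∀ j : ℕ, h 2 ((Equiv.pnatEquivNat.symm j : ℕ+) : ℕ)
        / (((Equiv.pnatEquivNat.symm j : ℕ+) : ℕ) : ℝ) ^ 3
        = 8 * ((1/(2*(j:ℝ)+2)^3) * ∑ i ∈ Finset.range (j+1), (1:ℝ)/(2*(i:ℝ)+1)^2) := by
      intro j
      simp only [Equiv.pnatEquivNat_symm_apply]
      have hc : ((j.succPNat : ℕ) : ℝ) = (j:ℝ)+1 := by
        norm_num [Nat.succPNat]
      have hh : h 2 (j.succPNat : ℕ) = ∑ i ∈ Finset.range (j+1), (1:ℝ)/(2*(i:ℝ)+1)^2 := by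
        unfold h
        norm_num [Nat.succPNat]
      rw [hh, hc]
      have hj : ((j:ℝ)+1) ≠ 0 := by positivity
      have hj2 : (2*(j:ℝ)+2) ≠ 0 := by positivity
      field_simp
      ring
    rw [tsum_congr hpt, tsum_mul_left, ← S11.A1_iter]
  rw [hLHS, S11.A1_val]
  ring
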